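/- Suppose a single player runs OptDA with a regularizer h on X and the adaptive learning rate. Let Ω be a nonempty set (the possible action profiles of the opponents), let ℓ : E × Ω → ℝ be such that for every a ∈ Ω the function x ↦ ℓ(x,a) is convex on X, let (a_t)_{t≥1} be an arbitrary sequence in Ω, and suppose that for every t ≥ 1 the feedback g_t is a subgradient of ℓ(·, a_t) at X_{t+1/2} relative to X (i.e. ℓ(p, a_t) ≥ ℓ(X_{t+1/2}, a_t) + ⟨g_t, p − X_{t+1/2}⟩ for all p ∈ X) and that ‖g_t‖ ≤ M for some constant M ≥ 0. Then for every T ≥ 1 and every p ∈ X: Σ_{t=1}^{T} (ℓ(X_{t+1/2}, a_t) − ℓ(p, a_t)) ≤ (1 + h(p) − h(X_1)) · √(1 + 4M²T) + 2M². In particular, for every bounded set C ⊆ X the regret max_{p∈C} Σ_{t=1}^{T} (ℓ(X_{t+1/2}, a_t) − ℓ(p, a_t)) is O(M√T + M²). -/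

import Mathlib

open scoped RealInnerProductSpace
open Filter Finset Topology

noncomputable section

/-- Bregman divergence of a regularizer `h` with gradient map `Gh`. -/
def breg {F : Type*} [NormedAddCommGroup F] [InnerProductSpace ℝ F]
    (h : F → ℝ) (Gh : F → F) (p x : F) : ℝ :=
  h p - h x - ⟪Gh x, p - x⟫

/-- `h` is a regularizer on `X`: a convex differentiable function with gradient map `Gh`
that is `1`-strongly convex on `X`. -/
structure IsRegularizer {F : Type*} [NormedAddCommGroup F] [InnerProductSpace ℝ F]
    (X : Set F) (h : F → ℝ) (Gh : F → F) : Prop where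
  convex : ConvexOn ℝ Set.univ h
  grad : ∀ x : F, HasFDerivAt h (innerSL ℝ (Gh x)) x
  strong : StrongConvexOn X 1 h

/-- The adaptive learning rate `η_t = √(1 + ∑_{s=1}^{t-1} ‖g_s - g_{s-1}‖²)`. -/
def adaEta {F : Type*} [NormedAddCommGroup F] [InnerProductSpace ℝ F]
    (g : ℕ → F) (t : ℕ) : ℝ :=
  Real.sqrt (1 + ∑ s ∈ Finset.Ico 1 t, ‖g s - g (s - 1)‖ ^ 2)

/-- OptDA iterates: `Z t` is the base state `X_t` and `W t` is the played action `X_{t+1/2}`,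
for feedback `g` (with `g 0 = 0`) and positive nondecreasing learning rates `η`. -/
structure IsOptDA {F : Type*} [NormedAddCommGroup F] [InnerProductSpace ℝ F]
    (X : Set F) (h : F → ℝ) (Gh : F → F)
    (η : ℕ → ℝ) (g : ℕ → F) (Z W : ℕ → F) : Prop where
  g_zero : g 0 = 0
  eta_pos : ∀ t : ℕ, 1 ≤ t → 0 < η t
  eta_mono : ∀ t : ℕ, 1 ≤ t → η t ≤ η (t + 1)
  base_mem : ∀ t : ℕ, 1 ≤ t → Z t ∈ X
  lead_mem : ∀ t : ℕ, 1 ≤ t → W t ∈ X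
  base_min : ∀ t : ℕ, 1 ≤ t → ∀ p ∈ X,
    ⟪∑ s ∈ Finset.Ico 1 t, g s, Z t⟫ + η t * h (Z t)
      ≤ ⟪∑ s ∈ Finset.Ico 1 t, g s, p⟫ + η t * h p
  lead_min : ∀ t : ℕ, 1 ≤ t → ∀ p ∈ X,
    ⟪g (t - 1), W t⟫ + η t * breg h Gh (W t) (Z t)
      ≤ ⟪g (t - 1), p⟫ + η t * breg h Gh p (Z t)

section Helpers

variable {F : Type*} [NormedAddCommGroup F] [InnerProductSpace ℝ F]

/-- Variational inequality at a constrained minimizer of `p ↦ ⟪v, p⟫ + η * h p`. -/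
lemma optda_vi_of_min {X : Set F} (hX : Convex ℝ X) {h : F → ℝ} {Gh : F → F}
    (hgrad : ∀ x : F, HasFDerivAt h (innerSL ℝ (Gh x)) x)
    {v x : F} {η : ℝ} (hx : x ∈ X)
    (hmin : ∀ p ∈ X, ⟪v, x⟫ + η * h x ≤ ⟪v, p⟫ + η * h p)
    {q : F} (hq : q ∈ X) : 0 ≤ ⟪v, q - x⟫ + η * ⟪Gh x, q - x⟫ := by
  set d := q - x with hd
  have hline : HasDerivAt (fun l : ℝ => x + l • d) d 0 := by
    simpa using ((hasDerivAt_id (0 : ℝ)).smul_const d).const_add x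
  have hder1 : HasDerivAt (fun l : ℝ => h (x + l • d)) ⟪Gh x, d⟫ 0 := by
    exact HasFDerivAt.comp_hasDerivAt 0 (by simpa using hgrad x) hline
  have hder2 : HasDerivAt (fun l : ℝ => ⟪v, x + l • d⟫) ⟪v, d⟫ 0 := by
    exact HasFDerivAt.comp_hasDerivAt 0
      ((innerSL ℝ v).hasFDerivAt (x := x + (0:ℝ) • d)) hline
  have hder : HasDerivAt (fun l : ℝ => ⟪v, x + l • d⟫ + η * h (x + l • d))
      (⟪v, d⟫ + η * ⟪Gh x, d⟫) 0 := hder2.add (hder1.const_mul η)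
  have hten := hder.tendsto_slope_zero_right
  refine ge_of_tendsto hten ?_
  filter_upwards [Ioo_mem_nhdsGT_of_mem (by norm_num : (0:ℝ) ∈ Set.Ico (0:ℝ) 1)] with l hl
  have hmem : x + l • d ∈ X := by
    have := hX hx hq (by linarith [hl.1, hl.2] : (0:ℝ) ≤ 1 - l) (le_of_lt hl.1) (by ring)
    have he : (1 - l) • x + l • q = x + l • d := by rw [hd]; rw [smul_sub, sub_smul, one_smul]; abel
    rwa [he] at this
  have h0 : ⟪v, x + (0:ℝ) • d⟫ + η * h (x + (0:ℝ) • d) = ⟪v, x⟫ + η * h x := by simp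
  have := hmin _ hmem
  have hq0 : 0 ≤ (⟪v, x + ((0:ℝ)+l) • d⟫ + η * h (x + ((0:ℝ)+l) • d)) -
      (⟪v, x + (0:ℝ) • d⟫ + η * h (x + (0:ℝ) • d)) := by
    simp only [zero_add, h0]
    linarith
  have hlpos : (0:ℝ) < l⁻¹ := inv_pos.2 hl.1
  have := mul_nonneg hlpos.le hq0
  simpa [smul_eq_mul] using this

/-- Gradient inequality for a `1`-strongly convex differentiable function. -/
lemma optda_grad_ineq {X : Set F} {h : F → ℝ} {Gh : F → F}
    (hgrad : ∀ x : F, HasFDerivAt h (innerSL ℝ (Gh x)) x)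
    (hsc : StrongConvexOn X 1 h) {x q : F} (hx : x ∈ X) (hq : q ∈ X) :
    h x + ⟪Gh x, q - x⟫ + 1 / 2 * ‖q - x‖ ^ 2 ≤ h q := by
  set d := q - x with hd
  have hline : HasDerivAt (fun l : ℝ => x + l • d) d 0 := by
    simpa using ((hasDerivAt_id (0 : ℝ)).smul_const d).const_add x
  have hder : HasDerivAt (fun l : ℝ => h (x + l • d)) ⟪Gh x, d⟫ 0 := by
    exact HasFDerivAt.comp_hasDerivAt 0 (by simpa using hgrad x) hline
  have hten := hder.tendsto_slope_zero_right
  have hten2 : Tendsto (fun l : ℝ => h q - h x - (1 - l) * (1 / 2 * ‖q - x‖ ^ 2))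
      (𝓝[>] (0:ℝ)) (𝓝 (h q - h x - 1 / 2 * ‖q - x‖ ^ 2)) := by
    have hc : Continuous (fun l : ℝ => h q - h x - (1 - l) * (1 / 2 * ‖q - x‖ ^ 2)) := by
      continuity
    have := (hc.tendsto 0).mono_left (nhdsWithin_le_nhds (s := Set.Ioi (0:ℝ)))
    simpa using this
  have hle : ⟪Gh x, d⟫ ≤ h q - h x - 1 / 2 * ‖q - x‖ ^ 2 := by
    refine le_of_tendsto_of_tendsto hten hten2 ?_
    filter_upwards [Ioo_mem_nhdsGT_of_mem (by norm_num : (0:ℝ) ∈ Set.Ico (0:ℝ) 1)] with l hl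
    have hl' : (0:ℝ) < l := hl.1
    have hl1 : l < 1 := hl.2
    have hcomb := hsc.2 hx hq (by linarith : (0:ℝ) ≤ 1 - l) (le_of_lt hl') (by ring)
    have he : (1 - l) • x + l • q = x + l • d := by rw [hd, smul_sub, sub_smul, one_smul]; abel
    rw [he] at hcomb
    have hnorm : ‖x - q‖ = ‖q - x‖ := norm_sub_rev _ _
    have hcomb' : h (x + l • d) ≤ (1 - l) * h x + l * h q - (1 - l) * l * (1 / 2 * ‖q - x‖ ^ 2) := by
      rw [hnorm] at hcomb
      simpa [smul_eq_mul] using hcomb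
    have hstep : h (x + ((0:ℝ)+l) • d) - h (x + (0:ℝ) • d) ≤
        l * (h q - h x - (1 - l) * (1 / 2 * ‖q - x‖ ^ 2)) := by
      simp only [zero_add, zero_smul, add_zero]
      nlinarith [hcomb']
    calc l⁻¹ • (h (x + ((0:ℝ)+l) • d) - h (x + (0:ℝ) • d))
        ≤ l⁻¹ * (l * (h q - h x - (1 - l) * (1 / 2 * ‖q - x‖ ^ 2))) := by
          rw [smul_eq_mul]
          exact mul_le_mul_of_nonneg_left hstep (inv_pos.2 hl').le
      _ = h q - h x - (1 - l) * (1 / 2 * ‖q - x‖ ^ 2) := by field_simp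
  linarith [hle]

lemma optda_telescope (f : ℕ → ℝ) : ∀ n : ℕ, ∑ t ∈ Finset.Icc 1 n, (f t - f (t+1)) = f 1 - f (n+1) := by
  intro n
  induction n with
  | zero => simp
  | succ n ih => rw [Finset.sum_Icc_succ_top (by omega : 1 ≤ n+1), ih]; ring

end Helpers

set_option maxHeartbeats 1000000 in
/-- Theorem 1: adversarial regret bound for OptDA with the adaptive learning rate. -/
theorem optda_adversarial_regret
    {F : Type*} [NormedAddCommGroup F] [InnerProductSpace ℝ F]
    {Ω : Type*} [Nonempty Ω]
    (X : Set F) (hXne : X.Nonempty) (hXcl : IsClosed X) (hXcv : Convex ℝ X)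
    (h : F → ℝ) (Gh : F → F) (hreg : IsRegularizer X h Gh)
    (L : F → Ω → ℝ) (hLconv : ∀ a : Ω, ConvexOn ℝ X fun x => L x a)
    (a : ℕ → Ω) (g : ℕ → F) (Z W : ℕ → F)
    (hrun : IsOptDA X h Gh (adaEta g) g Z W)
    (hsub : ∀ t : ℕ, 1 ≤ t → ∀ p ∈ X, L (W t) (a t) + ⟪g t, p - W t⟫ ≤ L p (a t))
    (M : ℝ) (hM : 0 ≤ M) (hgM : ∀ t : ℕ, 1 ≤ t → ‖g t‖ ≤ M) :
    ∀ T : ℕ, 1 ≤ T → ∀ p ∈ X,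
      ∑ t ∈ Finset.Icc 1 T, (L (W t) (a t) - L p (a t))
        ≤ (1 + h p - h (Z 1)) * Real.sqrt (1 + 4 * M ^ 2 * T) + 2 * M ^ 2 := by
  intro T hT p hp
  set η : ℕ → ℝ := adaEta g with hη
  set Y : ℕ → F := fun t => ∑ s ∈ Finset.Ico 1 t, g s with hYdef
  set Fq : ℕ → ℝ := fun t => ⟪Y t, p - Z t⟫ + η t * (h p - h (Z t)) with hFqdef
  -- basic facts about the learning rate
  have hu_nonneg : ∀ t : ℕ, (0:ℝ) ≤ ∑ s ∈ Finset.Ico 1 t, ‖g s - g (s - 1)‖ ^ 2 := by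
    intro t; exact Finset.sum_nonneg fun s _ => by positivity
  have hη_eq : ∀ t : ℕ, η t = Real.sqrt (1 + ∑ s ∈ Finset.Ico 1 t, ‖g s - g (s - 1)‖ ^ 2) :=
    fun t => rfl
  have hη_one_le : ∀ t : ℕ, 1 ≤ η t := by
    intro t
    rw [hη_eq t]
    have h1 : Real.sqrt 1 ≤ Real.sqrt (1 + ∑ s ∈ Finset.Ico 1 t, ‖g s - g (s - 1)‖ ^ 2) :=
      Real.sqrt_le_sqrt (by linarith [hu_nonneg t])
    simpa using h1
  have hη_pos : ∀ t : ℕ, 0 < η t := fun t => lt_of_lt_of_le one_pos (hη_one_le t)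
  have hη_sq : ∀ t : ℕ, η t ^ 2 = 1 + ∑ s ∈ Finset.Ico 1 t, ‖g s - g (s - 1)‖ ^ 2 := by
    intro t; rw [hη_eq t]; exact Real.sq_sqrt (by linarith [hu_nonneg t])
  have hη_one : η 1 = 1 := by
    rw [hη_eq 1]; simp
  have hη_mono : ∀ t : ℕ, η t ≤ η (t + 1) := by
    intro t
    rw [hη_eq t, hη_eq (t+1)]
    apply Real.sqrt_le_sqrt
    have : Finset.Ico 1 t ⊆ Finset.Ico 1 (t+1) := Finset.Ico_subset_Ico le_rfl (by omega)
    have := Finset.sum_le_sum_of_subset_of_nonneg this fun s _ _ => (by positivity : (0:ℝ) ≤ ‖g s - g (s-1)‖^2)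
    linarith
  have hY1 : Y 1 = 0 := by simp [hYdef]
  have hYsucc : ∀ t : ℕ, 1 ≤ t → Y (t + 1) = Y t + g t := by
    intro t ht
    simp only [hYdef]
    exact Finset.sum_Ico_succ_top (by omega) g
  -- Z 1 minimizes h on X
  have hZ1min : ∀ q ∈ X, h (Z 1) ≤ h q := by
    intro q hq
    have := hrun.base_min 1 le_rfl q hq
    simp only [Finset.Ico_self, Finset.sum_empty, inner_zero_left] at this
    rw [hη_one] at this
    linarith
  have hpZ1 : 0 ≤ h p - h (Z 1) := by linarith [hZ1min p hp]
  -- F is nonnegative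
  have hF_nonneg : ∀ t : ℕ, 1 ≤ t → 0 ≤ Fq t := by
    intro t ht
    have := hrun.base_min t ht p hp
    simp only [hFqdef, inner_sub_right]
    have hYt : (∑ s ∈ Finset.Ico 1 t, g s) = Y t := rfl
    rw [hYt] at this
    nlinarith [this]
  -- the per-step inequality
  have step : ∀ t : ℕ, 1 ≤ t →
      ⟪g t, W t - p⟫ ≤ Fq t - Fq (t + 1) + (η (t + 1) - η t) * (h p - h (Z 1))
        + ‖g t - g (t - 1)‖ ^ 2 / (2 * η t) := by
    intro t ht
    have hZt : Z t ∈ X := hrun.base_mem t ht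
    have hZt1 : Z (t + 1) ∈ X := hrun.base_mem (t + 1) (by omega)
    have hWt : W t ∈ X := hrun.lead_mem t ht
    have het := hη_pos t
    have het1 := hη_pos (t + 1)
    have hmono := hη_mono t
    -- VI for the base step at time t, tested at Z (t+1)
    have viZ : 0 ≤ ⟪Y t, Z (t+1) - Z t⟫ + η t * ⟪Gh (Z t), Z (t+1) - Z t⟫ :=
      optda_vi_of_min hXcv hreg.grad hZt (hrun.base_min t ht) hZt1
    -- VI for the leading step at time t, tested at Z (t+1)
    have hminW : ∀ r ∈ X, ⟪g (t-1) - η t • Gh (Z t), W t⟫ + η t * h (W t)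
        ≤ ⟪g (t-1) - η t • Gh (Z t), r⟫ + η t * h r := by
      intro r hr
      have hlm := hrun.lead_min t ht r hr
      simp only [breg, inner_sub_left, inner_sub_right, real_inner_smul_left] at hlm ⊢
      ring_nf at hlm ⊢
      linarith [hlm]
    have viW : 0 ≤ ⟪g (t-1) - η t • Gh (Z t), Z (t+1) - W t⟫
        + η t * ⟪Gh (W t), Z (t+1) - W t⟫ :=
      optda_vi_of_min hXcv hreg.grad hWt hminW hZt1
    -- strong convexity inequalities
    have gWZ := optda_grad_ineq hreg.grad hreg.strong hWt hZt1
    have gZW := optda_grad_ineq hreg.grad hreg.strong hZt hWt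
    have gWZ' := mul_le_mul_of_nonneg_left gWZ het.le
    have gZW' := mul_le_mul_of_nonneg_left gZW het.le
    -- Young's inequality
    have young : ⟪g t - g (t-1), W t - Z (t+1)⟫
        ≤ ‖g t - g (t-1)‖ ^ 2 / (2 * η t) + η t / 2 * ‖W t - Z (t+1)‖ ^ 2 := by
      have hcs := real_inner_le_norm (g t - g (t-1)) (W t - Z (t+1))
      have hid : ‖g t - g (t-1)‖ ^ 2 / (2 * η t) + η t / 2 * ‖W t - Z (t+1)‖ ^ 2
          - ‖g t - g (t-1)‖ * ‖W t - Z (t+1)‖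
          = (‖g t - g (t-1)‖ - η t * ‖W t - Z (t+1)‖) ^ 2 / (2 * η t) := by
        field_simp
        ring
      have hnn : 0 ≤ (‖g t - g (t-1)‖ - η t * ‖W t - Z (t+1)‖) ^ 2 / (2 * η t) :=
        div_nonneg (sq_nonneg _) (by linarith)
      linarith
    have hns : ‖W t - Z (t+1)‖ ^ 2 = ‖Z (t+1) - W t‖ ^ 2 := by rw [norm_sub_rev]
    -- monotonicity correction
    have hmul : (η (t+1) - η t) * (h p - h (Z (t+1)))
        ≤ (η (t+1) - η t) * (h p - h (Z 1)) :=
      mul_le_mul_of_nonneg_left (by linarith [hZ1min (Z (t+1)) hZt1]) (by linarith)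
    -- expand everything and finish linearly
    have hFt : Fq t = ⟪Y t, p⟫ - ⟪Y t, Z t⟫ + η t * h p - η t * h (Z t) := by
      simp only [hFqdef, inner_sub_right]; ring
    have hFt1 : Fq (t+1) = ⟪Y t, p⟫ + ⟪g t, p⟫ - ⟪Y t, Z (t+1)⟫ - ⟪g t, Z (t+1)⟫
        + η (t+1) * h p - η (t+1) * h (Z (t+1)) := by
      simp only [hFqdef, inner_sub_right, hYsucc t ht, inner_add_left]; ring
    rw [hFt, hFt1]
    simp only [inner_sub_left, inner_sub_right, real_inner_smul_left] at viZ viW young gWZ' gZW' ⊢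
    rw [hns] at young
    linarith [viZ, viW, young, gWZ', gZW', hmul, mul_nonneg het.le (sq_nonneg ‖W t - Z t‖)]
  -- bound the regret by the linearized regret
  have hreg1 : ∑ t ∈ Finset.Icc 1 T, (L (W t) (a t) - L p (a t))
      ≤ ∑ t ∈ Finset.Icc 1 T, ⟪g t, W t - p⟫ := by
    refine Finset.sum_le_sum fun t htm => ?_
    have ht1 : 1 ≤ t := (Finset.mem_Icc.1 htm).1
    have h1 := hsub t ht1 p hp
    have h2 : ⟪g t, p - W t⟫ + ⟪g t, W t - p⟫ = 0 := by
      simp only [inner_sub_right]; ring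
    linarith
  -- sum the per-step inequality
  have hsum_step : ∑ t ∈ Finset.Icc 1 T, ⟪g t, W t - p⟫
      ≤ ∑ t ∈ Finset.Icc 1 T, (Fq t - Fq (t+1))
        + ∑ t ∈ Finset.Icc 1 T, (η (t+1) - η t) * (h p - h (Z 1))
        + ∑ t ∈ Finset.Icc 1 T, ‖g t - g (t-1)‖ ^ 2 / (2 * η t) := by
    rw [← Finset.sum_add_distrib, ← Finset.sum_add_distrib]
    exact Finset.sum_le_sum fun t htm => step t (Finset.mem_Icc.1 htm).1
  -- telescope the F-sum
  have htelF : ∑ t ∈ Finset.Icc 1 T, (Fq t - Fq (t+1)) = Fq 1 - Fq (T+1) :=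
    optda_telescope Fq T
  -- telescope the middle sum
  have htelη : ∑ t ∈ Finset.Icc 1 T, (η (t+1) - η t) = η (T+1) - 1 := by
    calc ∑ t ∈ Finset.Icc 1 T, (η (t+1) - η t)
        = ∑ t ∈ Finset.Icc 1 T, ((fun s => -η s) t - (fun s => -η s) (t+1)) := by
          refine Finset.sum_congr rfl fun t _ => ?_
          show η (t+1) - η t = -η t - -η (t+1); ring
      _ = (fun s => -η s) 1 - (fun s => -η s) (T+1) := optda_telescope _ T
      _ = η (T+1) - 1 := by show -η 1 - -η (T+1) = _; rw [hη_one]; ring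
  have hmid : ∑ t ∈ Finset.Icc 1 T, (η (t+1) - η t) * (h p - h (Z 1))
      = (η (T+1) - 1) * (h p - h (Z 1)) := by
    rw [← Finset.sum_mul, htelη]
  -- bound on each feedback difference
  have habound : ∀ s : ℕ, 1 ≤ s → ‖g s - g (s-1)‖ ^ 2 ≤ 4 * M ^ 2 := by
    intro s hs
    have h1 : ‖g s - g (s-1)‖ ≤ 2 * M := by
      have hn := norm_sub_le (g s) (g (s-1))
      have hgs := hgM s hs
      have hgs1 : ‖g (s-1)‖ ≤ M := by
        by_cases h1s : s = 1
        · rw [h1s]; simpa [hrun.g_zero] using hM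
        · exact hgM (s-1) (by omega)
      linarith
    nlinarith [norm_nonneg (g s - g (s-1))]
  -- per-step bound for the adaptive sum
  have step3 : ∀ t : ℕ, 1 ≤ t → ‖g t - g (t-1)‖ ^ 2 / (2 * η t)
      ≤ (η (t+1) - η t) + 2 * M ^ 2 * (1 / η t - 1 / η (t+1)) := by
    intro t ht
    have hasq := habound t ht
    have he2 : η (t+1) ^ 2 = η t ^ 2 + ‖g t - g (t-1)‖ ^ 2 := by
      rw [hη_sq, hη_sq, Finset.sum_Ico_succ_top (by omega : 1 ≤ t)]
      ring
    have het := hη_pos t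
    have het1 := hη_pos (t+1)
    have hmono := hη_mono t
    have hp1 : ‖g t - g (t-1)‖ ^ 2 / (2 * η (t+1)) ≤ η (t+1) - η t := by
      rw [div_le_iff₀ (by linarith : (0:ℝ) < 2 * η (t+1))]
      nlinarith [sq_nonneg (η (t+1) - η t)]
    have hinv : 1 / η (t+1) ≤ 1 / η t := one_div_le_one_div_of_le het hmono
    have hp2 : ‖g t - g (t-1)‖ ^ 2 / (2 * η t) - ‖g t - g (t-1)‖ ^ 2 / (2 * η (t+1))
        = ‖g t - g (t-1)‖ ^ 2 / 2 * (1 / η t - 1 / η (t+1)) := by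
      field_simp
    have hp3 : ‖g t - g (t-1)‖ ^ 2 / 2 * (1 / η t - 1 / η (t+1))
        ≤ 2 * M ^ 2 * (1 / η t - 1 / η (t+1)) :=
      mul_le_mul_of_nonneg_right (by linarith) (by linarith)
    linarith
  -- the adaptive sum bound
  have hsum3 : ∑ t ∈ Finset.Icc 1 T, ‖g t - g (t-1)‖ ^ 2 / (2 * η t)
      ≤ η (T+1) - 1 + 2 * M ^ 2 := by
    have hb : ∑ t ∈ Finset.Icc 1 T, ‖g t - g (t-1)‖ ^ 2 / (2 * η t)
        ≤ ∑ t ∈ Finset.Icc 1 T, ((η (t+1) - η t) + 2 * M ^ 2 * (1 / η t - 1 / η (t+1))) :=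
      Finset.sum_le_sum fun t htm => step3 t (Finset.mem_Icc.1 htm).1
    rw [Finset.sum_add_distrib, htelη, ← Finset.mul_sum,
      optda_telescope (fun s => 1 / η s) T] at hb
    have hη1inv : 1 / η 1 = 1 := by rw [hη_one]; norm_num
    rw [hη1inv] at hb
    have hpos : 0 ≤ 2 * M ^ 2 * (1 / η (T+1)) :=
      mul_nonneg (by positivity) (one_div_nonneg.2 (hη_pos _).le)
    nlinarith [hb]
  -- final learning-rate bound
  have hfin : η (T+1) ≤ Real.sqrt (1 + 4 * M ^ 2 * T) := by
    rw [hη_eq]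
    apply Real.sqrt_le_sqrt
    have hcard : (Finset.Ico 1 (T+1)).card = T := by simp
    have hb := Finset.sum_le_card_nsmul (Finset.Ico 1 (T+1))
      (fun s => ‖g s - g (s-1)‖ ^ 2) (4 * M ^ 2)
      (fun s hs => habound s (Finset.mem_Ico.1 hs).1)
    rw [hcard, nsmul_eq_mul] at hb
    have : (T : ℝ) * (4 * M ^ 2) = 4 * M ^ 2 * T := by ring
    rw [this] at hb
    linarith
  -- put everything together
  have hFq1 : Fq 1 = h p - h (Z 1) := by
    simp only [hFqdef, hY1, inner_zero_left, hη_one]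
    ring
  have hFT1 : 0 ≤ Fq (T+1) := hF_nonneg (T+1) (by omega)
  have hprod : η (T+1) * (h p - h (Z 1)) ≤ Real.sqrt (1 + 4 * M ^ 2 * T) * (h p - h (Z 1)) :=
    mul_le_mul_of_nonneg_right hfin hpZ1
  have hS1 : (1:ℝ) ≤ Real.sqrt (1 + 4 * M ^ 2 * T) := by
    have h0 : (0:ℝ) ≤ 4 * M ^ 2 * T := by positivity
    nlinarith [Real.sq_sqrt (by linarith : (0:ℝ) ≤ 1 + 4 * M ^ 2 * T),
      Real.sqrt_nonneg (1 + 4 * M ^ 2 * T)]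
  calc ∑ t ∈ Finset.Icc 1 T, (L (W t) (a t) - L p (a t))
      ≤ ∑ t ∈ Finset.Icc 1 T, ⟪g t, W t - p⟫ := hreg1
    _ ≤ (Fq 1 - Fq (T+1)) + (η (T+1) - 1) * (h p - h (Z 1)) + (η (T+1) - 1 + 2 * M ^ 2) := by
        rw [htelF, hmid] at hsum_step
        exact hsum_step.trans (by linarith [hsum3])
    _ ≤ (1 + h p - h (Z 1)) * Real.sqrt (1 + 4 * M ^ 2 * T) + 2 * M ^ 2 := by
        rw [hFq1]
        nlinarith [hprod, hfin, hFT1, hS1, hpZ1]
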